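/- Let μ, ν > 0, C > 1, and let (x_n) be a sequence of positive reals tending to 0 satisfying: (i) x_{n+1}/x_{n+2} ≤ C²(x_n/x_{n+1})^ν whenever n ≥ n₀ and x_n ≥ x_{n+1}, and (ii) (1/C²)(x_{n+1}/x_n)^μ ≤ x_{n+2}/x_{n+1} whenever n ≥ n₀ and x_n ≤ x_{n+1}. Then there exist α, β > 0 such that x_n^α ≤ x_{n+1} ≤ x_n^β for all sufficiently large n. -/
import Mathlib


open Filter Topology

theorem stmt_14 (x : ℕ → ℝ) (hpos : ∀ n, 0 < x n)
    (hlim : Tendsto x atTop (𝓝 0))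
    (μ ν C : ℝ) (hμ : 0 < μ) (hν : 0 < ν) (hC : 1 < C) (n₀ : ℕ)
    (h1 : ∀ n : ℕ, n₀ ≤ n → x (n + 1) ≤ x n →
      x (n + 1) / x (n + 2) ≤ C ^ 2 * (x n / x (n + 1)) ^ ν)
    (h2 : ∀ n : ℕ, n₀ ≤ n → x n ≤ x (n + 1) →
      (1 / C ^ 2) * (x (n + 1) / x n) ^ μ ≤ x (n + 2) / x (n + 1)) :
    ∃ α β : ℝ, 0 < α ∧ 0 < β ∧
      ∀ᶠ n in atTop, x n ^ α ≤ x (n + 1) ∧ x (n + 1) ≤ x n ^ β := by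
  have hC0 : (0:ℝ) < C := lt_trans one_pos hC
  set c : ℝ := 2 * Real.log C with hcdef
  have hc0 : 0 < c := by
    have := Real.log_pos hC
    positivity
  set β : ℝ := μ / (2 * (μ + 1)) with hβdef
  set α : ℝ := 1 + 2 * μ + ν with hαdef
  have hβ0 : 0 < β := by positivity
  have hα0 : 0 < α := by positivity
  refine ⟨α, β, hα0, hβ0, ?_⟩
  -- eventually x n is small
  have hε0 : (0:ℝ) < Real.exp (-(2 * c / μ)) := Real.exp_pos _
  have hev : ∀ᶠ n in atTop, x n < Real.exp (-(2 * c / μ)) :=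
    hlim.eventually_lt_const hε0
  obtain ⟨N, hN⟩ := eventually_atTop.1 hev
  -- y k := - log (x k); for k ≥ N, y k > 2c/μ > 0
  have hy : ∀ k, N ≤ k → 2 * c / μ < -Real.log (x k) := by
    intro k hk
    have h := Real.log_lt_log (hpos k) (hN k hk)
    rw [Real.log_exp] at h
    linarith
  have hy0 : ∀ k, N ≤ k → 0 < -Real.log (x k) := by
    intro k hk
    have := hy k hk
    have h2 : 0 < 2 * c / μ := by positivity
    linarith
  -- log form of h1
  have L1 : ∀ k, n₀ ≤ k → x (k + 1) ≤ x k →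
      Real.log (x (k + 1)) - Real.log (x (k + 2)) ≤
        c + ν * (Real.log (x k) - Real.log (x (k + 1))) := by
    intro k hk hxk
    have hq : (0:ℝ) < x (k + 1) / x (k + 2) := by
      have := hpos (k + 1); have := hpos (k + 2); positivity
    have hr : (0:ℝ) < x k / x (k + 1) := by
      have := hpos k; have := hpos (k + 1); positivity
    have := Real.log_le_log hq (h1 k hk hxk)
    rw [Real.log_div (hpos (k+1)).ne' (hpos (k+2)).ne',
      Real.log_mul (by positivity) (by positivity),
      Real.log_pow, Real.log_rpow hr,
      Real.log_div (hpos k).ne' (hpos (k+1)).ne'] at this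
    push_cast at this
    linarith [this]
  -- log form of h2
  have L2 : ∀ k, n₀ ≤ k → x k ≤ x (k + 1) →
      -c + μ * (Real.log (x (k + 1)) - Real.log (x k)) ≤
        Real.log (x (k + 2)) - Real.log (x (k + 1)) := by
    intro k hk hxk
    have hr : (0:ℝ) < x (k + 1) / x k := by
      have := hpos k; have := hpos (k + 1); positivity
    have hq : (0:ℝ) < (1 / C ^ 2) * (x (k + 1) / x k) ^ μ := by positivity
    have := Real.log_le_log hq (h2 k hk hxk)
    rw [Real.log_div (hpos (k+2)).ne' (hpos (k+1)).ne',
      Real.log_mul (by positivity) (by positivity),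
      Real.log_div one_ne_zero (by positivity),
      Real.log_pow, Real.log_rpow hr,
      Real.log_div (hpos (k+1)).ne' (hpos k).ne'] at this
    push_cast at this
    simp only [Real.log_one] at this
    linarith [this]
  -- lower bound: for k ≥ max N n₀, β * y k ≤ y (k+1)
  have lower : ∀ k, N ≤ k → n₀ ≤ k →
      β * (-Real.log (x k)) ≤ -Real.log (x (k + 1)) := by
    intro k hkN hk
    by_contra hcon
    push_neg at hcon
    have hyk := hy k hkN
    have hyk0 := hy0 k hkN
    have hyk2 : 0 < -Real.log (x (k + 2)) := hy0 (k + 2) (by omega)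
    -- β < 1 so y(k+1) < y k, i.e. x k < x (k+1)
    have hβ1 : β < 1 := by
      rw [hβdef, div_lt_one (by positivity)]; linarith
    have hlt : Real.log (x k) < Real.log (x (k + 1)) := by nlinarith
    have hxlt : x k ≤ x (k + 1) :=
      le_of_lt ((Real.log_lt_log_iff (hpos k) (hpos (k+1))).1 hlt)
    have hL := L2 k hk hxlt
    -- (1+μ) β = μ/2
    have hkey : (1 + μ) * β = μ / 2 := by
      rw [hβdef]; field_simp; ring
    have hcμ : c < μ / 2 * (-Real.log (x k)) := by
      have : 2 * c / μ < -Real.log (x k) := hyk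
      rw [div_lt_iff₀ hμ] at this
      linarith
    nlinarith [hcon, hL, hyk2]
  -- main eventual statement
  filter_upwards [eventually_ge_atTop (max (N + 1) (n₀ + 1))] with n hn
  obtain ⟨m, rfl⟩ : ∃ m, n = m + 1 := ⟨n - 1, by omega⟩
  have hmN : N ≤ m := by omega
  have hm0 : n₀ ≤ m := by omega
  have hnN : N ≤ m + 1 := by omega
  have hn0 : n₀ ≤ m + 1 := by omega
  have hyn0 := hy0 (m + 1) hnN
  have hym0 := hy0 m hmN
  have hcμ : c < μ / 2 * (-Real.log (x (m + 1))) := by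
    have := hy (m + 1) hnN
    rw [div_lt_iff₀ hμ] at this
    linarith
  constructor
  · -- x (m+1) ^ α ≤ x (m+2), i.e. y (m+2) ≤ α * y (m+1)
    have hgoal : -Real.log (x (m + 1 + 1)) ≤ α * (-Real.log (x (m + 1))) := by
      rcases le_or_gt (-Real.log (x (m + 1 + 1))) (-Real.log (x (m + 1))) with h | h
      · have : α ≥ 1 := by rw [hαdef]; linarith
        nlinarith
      · -- y (m+2) > y (m+1): use step at m
        rcases le_total (x (m + 1)) (x m) with hle | hle
        · have hL := L1 m hm0 hle
          rw [hαdef]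
          nlinarith
        · have hL := L2 m hm0 hle
          rw [hαdef]
          nlinarith
    rw [← Real.log_le_log_iff (Real.rpow_pos_of_pos (hpos (m+1)) α) (hpos (m+1+1)),
      Real.log_rpow (hpos (m+1))]
    linarith
  · -- x (m+2) ≤ x (m+1) ^ β, i.e. β * y (m+1) ≤ y (m+2)
    have hgoal := lower (m + 1) hnN hn0
    rw [← Real.log_le_log_iff (hpos (m+1+1)) (Real.rpow_pos_of_pos (hpos (m+1)) β),
      Real.log_rpow (hpos (m+1))]
    linarith
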